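/- Let K ∈ ℝ, N ∈ (1,∞), p > N/2 and 0 < R < D_{K,N}. Then ∫₀^R h_{K,N}(t)·(t/v_{K,N}(t))^{1+1/(2p−1)} dt < ∞. -/

import Mathlib

open Real MeasureTheory Set

/-- The one-dimensional `(K,N)`-model density `h_{K,N}`. -/
noncomputable def modelDensity (K N t : ℝ) : ℝ :=
  if 0 < K then Real.sin (Real.sqrt (K / (N - 1)) * t) ^ (N - 1)
  else if K = 0 then t ^ (N - 1)
  else Real.sinh (Real.sqrt (-K / (N - 1)) * t) ^ (N - 1)

/-- The model volume `v_{K,N}(r) = ∫₀^r h_{K,N}(t) dt`. -/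
noncomputable def modelVolume (K N r : ℝ) : ℝ :=
  ∫ t in Set.Ioo (0:ℝ) r, modelDensity K N t

lemma my_sinh_le_mul_exp {x : ℝ} (_hx : 0 ≤ x) : Real.sinh x ≤ x * Real.exp x := by
  have h1 : (-(2*x)) + 1 ≤ Real.exp (-(2*x)) := Real.add_one_le_exp _
  have h2 : Real.exp (-(2*x)) = Real.exp (-x) * Real.exp (-x) := by
    rw [← Real.exp_add]; ring_nf
  have h3 : Real.exp x * Real.exp (-x) = 1 := by rw [← Real.exp_add]; simp
  have h4 : 0 < Real.exp (-x) := Real.exp_pos _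
  rw [Real.sinh_eq]
  nlinarith [Real.exp_pos x]

lemma modelDensity_continuous (K N : ℝ) (hN : 1 < N) :
    Continuous (modelDensity K N) := by
  have hN' : (0:ℝ) ≤ N - 1 := by linarith
  unfold modelDensity
  split_ifs
  · exact (Real.continuous_sin.comp (continuous_const.mul continuous_id)).rpow_const
      (fun x => Or.inr hN')
  · exact continuous_id.rpow_const (fun x => Or.inr hN')
  · exact (Real.continuous_sinh.comp (continuous_const.mul continuous_id)).rpow_const
      (fun x => Or.inr hN')

lemma modelDensity_bounds (K N R : ℝ) (hN : 1 < N) (hR : 0 < R)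
    (hRD : 0 < K → R < π * Real.sqrt ((N - 1) / K)) :
    ∃ c₁ c₂ : ℝ, 0 < c₁ ∧ ∀ t ∈ Set.Ioc (0:ℝ) R,
      c₁ * t ^ (N - 1) ≤ modelDensity K N t ∧ modelDensity K N t ≤ c₂ * t ^ (N - 1) := by
  have hN1 : (0:ℝ) < N - 1 := by linarith
  rcases lt_trichotomy K 0 with hK | hK | hK
  · -- K < 0
    set μ := Real.sqrt (-K / (N - 1)) with hμdef
    have hμ : 0 < μ := Real.sqrt_pos.mpr (div_pos (by linarith) hN1)
    refine ⟨μ ^ (N-1), (μ * Real.exp (μ * R)) ^ (N-1),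
      Real.rpow_pos_of_pos hμ _, fun t ht => ?_⟩
    have ht0 : 0 < t := ht.1
    have hμt : 0 < μ * t := mul_pos hμ ht0
    have hdef : modelDensity K N t = Real.sinh (μ * t) ^ (N-1) := by
      unfold modelDensity
      rw [if_neg (not_lt.mpr hK.le), if_neg hK.ne]
    constructor
    · rw [hdef, ← Real.mul_rpow hμ.le ht0.le]
      exact Real.rpow_le_rpow hμt.le (Real.self_lt_sinh_iff.mpr hμt).le hN1.le
    · rw [hdef, ← Real.mul_rpow (by positivity) ht0.le]
      refine Real.rpow_le_rpow (Real.sinh_nonneg_iff.mpr hμt.le) ?_ hN1.le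
      calc Real.sinh (μ * t) ≤ (μ * t) * Real.exp (μ * t) := my_sinh_le_mul_exp hμt.le
        _ ≤ (μ * t) * Real.exp (μ * R) := by
            gcongr
            exact ht.2
        _ = μ * Real.exp (μ * R) * t := by ring
  · -- K = 0
    refine ⟨1, 1, one_pos, fun t ht => ?_⟩
    have hdef : modelDensity K N t = t ^ (N-1) := by
      unfold modelDensity
      rw [if_neg (by simp [hK]), if_pos hK]
    simp [hdef]
  · -- K > 0
    set μ := Real.sqrt (K / (N - 1)) with hμdef
    have hμ : 0 < μ := Real.sqrt_pos.mpr (div_pos hK hN1)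
    have hμR : μ * R < π := by
      have h1 : μ * Real.sqrt ((N - 1) / K) = 1 := by
        rw [← Real.sqrt_mul (le_of_lt (div_pos hK hN1))]
        rw [show K / (N - 1) * ((N - 1) / K) = 1 by field_simp]
        exact Real.sqrt_one
      calc μ * R < μ * (π * Real.sqrt ((N - 1) / K)) := by
            exact mul_lt_mul_of_pos_left (hRD hK) hμ
        _ = π * (μ * Real.sqrt ((N - 1) / K)) := by ring
        _ = π := by rw [h1, mul_one]
    have hsinμR : 0 < Real.sin (μ * R) := Real.sin_pos_of_pos_of_lt_pi (mul_pos hμ hR) hμR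
    refine ⟨(Real.sin (μ * R) / R) ^ (N-1), μ ^ (N-1), Real.rpow_pos_of_pos (by positivity) _,
      fun t ht => ?_⟩
    have ht0 : 0 < t := ht.1
    have hμt : 0 < μ * t := mul_pos hμ ht0
    have hμtR : μ * t ≤ μ * R := by nlinarith [ht.2]
    have hdef : modelDensity K N t = Real.sin (μ * t) ^ (N-1) := by
      unfold modelDensity; rw [if_pos hK]
    have hsin_lb : Real.sin (μ * R) / R * t ≤ Real.sin (μ * t) := by
      have hmem0 : (0:ℝ) ∈ Set.Icc (0:ℝ) π := ⟨le_rfl, Real.pi_pos.le⟩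
      have hmem1 : μ * R ∈ Set.Icc (0:ℝ) π := ⟨(mul_pos hμ hR).le, hμR.le⟩
      have ha0 : (0:ℝ) ≤ 1 - t / R := by
        rw [sub_nonneg]; exact div_le_one_of_le₀ ht.2 hR.le
      have hb0 : (0:ℝ) ≤ t / R := by positivity
      have hab : (1 - t / R) + t / R = 1 := by ring
      have hcc := strictConcaveOn_sin_Icc.concaveOn.2 hmem0 hmem1 ha0 hb0 hab
      have harg : (1 - t / R) • (0:ℝ) + (t / R) • (μ * R) = μ * t := by
        simp only [smul_eq_mul]
        field_simp
        ring
      rw [harg] at hcc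
      simp only [smul_eq_mul, Real.sin_zero, mul_zero, zero_add] at hcc
      have hrearr : Real.sin (μ * R) / R * t = t / R * Real.sin (μ * R) := by ring
      linarith
    constructor
    · rw [hdef, ← Real.mul_rpow (by positivity) ht0.le]
      exact Real.rpow_le_rpow (by positivity) hsin_lb hN1.le
    · rw [hdef, ← Real.mul_rpow hμ.le ht0.le]
      refine Real.rpow_le_rpow ?_ (Real.sin_le hμt.le) hN1.le
      exact (Real.sin_pos_of_pos_of_lt_pi hμt (lt_of_le_of_lt hμtR hμR)).le

/-- for `K ∈ ℝ`, `N ∈ (1,∞)`, `p > N/2` and `0 < R < D_{K,N}`,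
the integral `∫₀^R h_{K,N}(t) (t/v_{K,N}(t))^{1+1/(2p−1)} dt` is finite. -/
theorem bishopGromov_constant_integrable
    (K N p R : ℝ) (hN : 1 < N) (hp : N / 2 < p)
    (hR : 0 < R) (hRD : 0 < K → R < π * Real.sqrt ((N - 1) / K)) :
    IntegrableOn
      (fun t : ℝ =>
        modelDensity K N t * (t / modelVolume K N t) ^ (1 + 1 / (2 * p - 1)))
      (Set.Ioo 0 R) := by
  have hN1 : (0:ℝ) < N - 1 := by linarith
  have h2p : (0:ℝ) < 2 * p - 1 := by linarith
  have hN2p : N - 1 < 2 * p - 1 := by linarith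
  obtain ⟨c₁, c₂, hc₁, hbd⟩ := modelDensity_bounds K N R hN hR hRD
  have hcont := modelDensity_continuous K N hN
  -- integrability of the density near 0
  have hrpow_int : IntegrableOn (fun t : ℝ => c₂ * t ^ (N-1)) (Set.Ioc 0 R) := by
    have := (intervalIntegral.intervalIntegrable_rpow' (a := 0) (b := R)
      (show (-1:ℝ) < N - 1 by linarith)).const_mul c₂
    rwa [intervalIntegrable_iff_integrableOn_Ioc_of_le hR.le] at this
  have hInt : IntegrableOn (modelDensity K N) (Set.Ioc 0 R) := by
    refine Integrable.mono' hrpow_int hcont.aestronglyMeasurable.restrict ?_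
    rw [ae_restrict_iff' measurableSet_Ioc]
    refine ae_of_all _ fun t ht => ?_
    have h1 := (hbd t ht).1
    have h2 := (hbd t ht).2
    have h0 : 0 ≤ modelDensity K N t := le_trans (mul_nonneg hc₁.le (Real.rpow_nonneg ht.1.le _)) h1
    rw [Real.norm_eq_abs, abs_of_nonneg h0]
    exact h2
  -- lower bound on the volume
  have hv_lb : ∀ t ∈ Set.Ioc (0:ℝ) R, c₁ * t ^ N / N ≤ modelVolume K N t := by
    intro t ht
    have ht0 : 0 < t := ht.1
    have hsub : Set.Ioo (0:ℝ) t ⊆ Set.Ioc (0:ℝ) R := fun s hs => ⟨hs.1, le_trans hs.2.le ht.2⟩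
    have hint1 : IntegrableOn (fun s : ℝ => c₁ * s ^ (N-1)) (Set.Ioo 0 t) := by
      have := (intervalIntegral.intervalIntegrable_rpow' (a := 0) (b := t)
        (show (-1:ℝ) < N - 1 by linarith)).const_mul c₁
      rw [intervalIntegrable_iff_integrableOn_Ioc_of_le ht0.le] at this
      exact this.mono_set Set.Ioo_subset_Ioc_self
    have hint2 : IntegrableOn (modelDensity K N) (Set.Ioo 0 t) := hInt.mono_set hsub
    have hcalc : ∫ s in Set.Ioo (0:ℝ) t, c₁ * s ^ (N-1) = c₁ * t ^ N / N := by
      rw [← integral_Ioc_eq_integral_Ioo, ← intervalIntegral.integral_of_le ht0.le,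
        intervalIntegral.integral_const_mul, integral_rpow (Or.inl (by linarith))]
      rw [show N - 1 + 1 = N by ring, Real.zero_rpow (ne_of_gt (by linarith))]
      ring
    calc c₁ * t ^ N / N = ∫ s in Set.Ioo (0:ℝ) t, c₁ * s ^ (N-1) := hcalc.symm
      _ ≤ ∫ s in Set.Ioo (0:ℝ) t, modelDensity K N s := by
          refine setIntegral_mono_on hint1 hint2 measurableSet_Ioo fun s hs => ?_
          exact (hbd s (hsub hs)).1
      _ = modelVolume K N t := rfl
  have hv_pos : ∀ t ∈ Set.Ioo (0:ℝ) R, 0 < modelVolume K N t := by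
    intro t ht
    have := hv_lb t ⟨ht.1, ht.2.le⟩
    have h0 : 0 < c₁ * t ^ N / N :=
      div_pos (mul_pos hc₁ (Real.rpow_pos_of_pos ht.1 N)) (by linarith)
    linarith
  -- continuity of the volume
  have hv_cont : ContinuousOn (modelVolume K N) (Set.Icc 0 R) := by
    have h1 : IntegrableOn (modelDensity K N) (Set.Icc 0 R) :=
      (integrableOn_Icc_iff_integrableOn_Ioc).mpr hInt
    have h2 := intervalIntegral.continuousOn_primitive (μ := volume) h1
    refine h2.congr fun x hx => ?_
    exact (integral_Ioc_eq_integral_Ioo).symm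
  -- measurability of the integrand
  have hmeas : AEStronglyMeasurable
      (fun t : ℝ => modelDensity K N t * (t / modelVolume K N t) ^ (1 + 1 / (2 * p - 1)))
      (volume.restrict (Set.Ioo 0 R)) := by
    refine ContinuousOn.aestronglyMeasurable ?_ measurableSet_Ioo
    refine (hcont.continuousOn).mul ?_
    refine ContinuousOn.rpow_const ?_ fun t ht => Or.inl ?_
    · exact (continuousOn_id).div
        ((hv_cont.mono (Set.Ioo_subset_Icc_self)))
        (fun t ht => (hv_pos t ht).ne')
    · exact (div_pos ht.1 (hv_pos t ht)).ne'
  -- the dominating function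
  set a : ℝ := 1 + 1 / (2 * p - 1) with ha_def
  have ha : 0 < a := by
    have := one_div_pos.mpr h2p
    rw [ha_def]; linarith
  set e : ℝ := N - 1 + (1 - N) * a with he_def
  have he : -1 < e := by
    have : e = -((N-1) / (2*p-1)) := by
      rw [he_def, ha_def]
      field_simp
      ring
    rw [this]
    rw [neg_lt, neg_neg]
    exact (div_lt_one h2p).mpr hN2p
  set C : ℝ := c₂ * (N / c₁) ^ a with hC_def
  have hg_int : IntegrableOn (fun t : ℝ => C * t ^ e) (Set.Ioo 0 R) := by
    have := (intervalIntegral.intervalIntegrable_rpow' (a := 0) (b := R) he).const_mul C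
    rw [intervalIntegrable_iff_integrableOn_Ioc_of_le hR.le] at this
    exact this.mono_set Set.Ioo_subset_Ioc_self
  refine Integrable.mono' hg_int hmeas ?_
  rw [ae_restrict_iff' measurableSet_Ioo]
  refine ae_of_all _ fun t ht => ?_
  have ht0 : 0 < t := ht.1
  have htIoc : t ∈ Set.Ioc (0:ℝ) R := ⟨ht.1, ht.2.le⟩
  have hv := hv_pos t ht
  have hvlb := hv_lb t htIoc
  have htN : (0:ℝ) < t ^ N := Real.rpow_pos_of_pos ht0 N
  have hw : (0:ℝ) < c₁ * t ^ N / N := div_pos (mul_pos hc₁ htN) (by linarith)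
  have hd1 : 0 ≤ modelDensity K N t := le_trans (mul_nonneg hc₁.le (Real.rpow_nonneg ht0.le _)) (hbd t htIoc).1
  have hdivpos : 0 < t / modelVolume K N t := div_pos ht0 hv
  rw [Real.norm_eq_abs, abs_of_nonneg (by positivity)]
  have step1 : t / modelVolume K N t ≤ (N / c₁) * t ^ (1 - N) := by
    have h1 : t / modelVolume K N t ≤ t / (c₁ * t ^ N / N) := by
      gcongr
    have h2 : t / (c₁ * t ^ N / N) = (N / c₁) * t ^ (1 - N) := by
      rw [Real.rpow_sub ht0, Real.rpow_one]
      field_simp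
    linarith [h1, h2.le]
  have step2 : (t / modelVolume K N t) ^ a ≤ ((N / c₁) * t ^ (1 - N)) ^ a :=
    Real.rpow_le_rpow hdivpos.le step1 ha.le
  calc modelDensity K N t * (t / modelVolume K N t) ^ a
      ≤ (c₂ * t ^ (N-1)) * (((N / c₁) * t ^ (1 - N)) ^ a) := by
        refine mul_le_mul (hbd t htIoc).2 step2 (Real.rpow_nonneg hdivpos.le a) ?_
        exact le_trans hd1 (hbd t htIoc).2
    _ = C * t ^ e := by
        rw [Real.mul_rpow (by positivity) (Real.rpow_nonneg ht0.le _),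
          ← Real.rpow_mul ht0.le, hC_def, he_def, Real.rpow_add ht0]
        ring
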